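/- The splitting field of X^3 - 6*X - 6 over ℚ equals the splitting field of X^3 + 54*X + 54 over ℚ. -/

import Mathlib

open Polynomial

theorem stmt8 :
    IntermediateField.adjoin ℚ
        ((X ^ 3 - 6 * X - 6 : ℚ[X]).rootSet (AlgebraicClosure ℚ)) =
      IntermediateField.adjoin ℚ
        ((X ^ 3 + 54 * X + 54 : ℚ[X]).rootSet (AlgebraicClosure ℚ)) := by
  have hf : (X ^ 3 - 6 * X - 6 : ℚ[X]) ≠ 0 := by
    intro h
    have := congrArg (fun p => Polynomial.coeff p 3) h
    simp [coeff_X] at this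
  have hg : (X ^ 3 + 54 * X + 54 : ℚ[X]) ≠ 0 := by
    intro h
    have := congrArg (fun p => Polynomial.coeff p 3) h
    simp [coeff_X] at this
  apply le_antisymm
  · rw [IntermediateField.adjoin_le_iff]
    intro x hx
    rw [mem_rootSet] at hx
    obtain ⟨-, hx⟩ := hx
    simp only [map_sub, map_mul, map_add, map_pow, aeval_X, map_ofNat] at hx
    set s : AlgebraicClosure ℚ := 6 * x ^ 2 - 9 * x - 24 with hs_def
    have hs : s ∈ (X ^ 3 + 54 * X + 54 : ℚ[X]).rootSet (AlgebraicClosure ℚ) := by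
      rw [mem_rootSet]
      refine ⟨hg, ?_⟩
      simp only [map_add, map_mul, map_pow, aeval_X, map_ofNat]
      rw [hs_def]
      linear_combination (216 * x ^ 3 - 972 * x ^ 2 + 162 * x + 2511) * hx
    have hmem : s ∈ IntermediateField.adjoin ℚ
        ((X ^ 3 + 54 * X + 54 : ℚ[X]).rootSet (AlgebraicClosure ℚ)) :=
      IntermediateField.subset_adjoin ℚ _ hs
    have hxeq : x = (2 * s ^ 2 - 3 * s + 72) / 27 := by
      rw [eq_div_iff (by norm_num : (27 : AlgebraicClosure ℚ) ≠ 0), hs_def]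
      linear_combination (-(72 : AlgebraicClosure ℚ) * x + 216) * hx
    rw [hxeq]
    refine div_mem (add_mem (sub_mem (mul_mem ?_ (pow_mem hmem 2))
      (mul_mem ?_ hmem)) ?_) ?_ <;>
      exact ofNat_mem _ _
  · rw [IntermediateField.adjoin_le_iff]
    intro x hx
    rw [mem_rootSet] at hx
    obtain ⟨-, hx⟩ := hx
    simp only [map_sub, map_mul, map_add, map_pow, aeval_X, map_ofNat] at hx
    set r : AlgebraicClosure ℚ := (2 * x ^ 2 - 3 * x + 72) / 27 with hr_def
    have hr : r ∈ (X ^ 3 - 6 * X - 6 : ℚ[X]).rootSet (AlgebraicClosure ℚ) := by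
      rw [mem_rootSet]
      refine ⟨hf, ?_⟩
      simp only [map_sub, map_mul, map_add, map_pow, aeval_X, map_ofNat]
      rw [hr_def]
      field_simp
      linear_combination (8 * x ^ 3 - 36 * x ^ 2 + 486 * x - 1107) * hx
    have hmem : r ∈ IntermediateField.adjoin ℚ
        ((X ^ 3 - 6 * X - 6 : ℚ[X]).rootSet (AlgebraicClosure ℚ)) :=
      IntermediateField.subset_adjoin ℚ _ hr
    have hxeq : x = 6 * r ^ 2 - 9 * r - 24 := by
      rw [hr_def]
      field_simp
      linear_combination ((-(24 : AlgebraicClosure ℚ)) * x + 72) * hx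
    rw [hxeq]
    refine sub_mem (sub_mem (mul_mem ?_ (pow_mem hmem 2)) (mul_mem ?_ hmem)) ?_ <;>
      exact ofNat_mem _ _
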